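/- arXiv:2310.03216 — 5 statements merged into one kernel-verified Lean document; each statement's English description precedes it below -/
import Mathlib

section
/- Let α ≥ 1, β ≥ 1 and N ≥ 1 be integers and let b ∈ ℕ. If x_2^b − y_2^b is integral over the ideal of ℂ[[x_2,y_2]] generated by x_2^β − y_2^β and x_2^N − y_2^N, then x_1^α x_2^b − y_1^α y_2^b is integral over the ideal I_Δ of ℂ[[x_1,x_2,y_1,y_2]] generated by x_1 − y_1, x_1^α x_2^β − y_1^α y_2^β and x_2^N − y_2^N. -/
/-- An element `f` of a commutative ring is *integral over the ideal* `I` if it satisfies an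
equation `f ^ m + a 1 * f ^ (m-1) + ⋯ + a (m-1) * f + a m = 0` with `a j ∈ I ^ j`. -/
def IsIntegralOverIdeal {R : Type*} [CommRing R] (I : Ideal R) (f : R) : Prop :=
  ∃ m : ℕ, 0 < m ∧ ∃ a : ℕ → R, (∀ j, 1 ≤ j → j ≤ m → a j ∈ I ^ j) ∧
    f ^ m + ∑ j ∈ Finset.Icc 1 m, a j * f ^ (m - j) = 0


open Finset

noncomputable section

/-- exponent embedding (Fin 2 →₀ ℕ) → (Fin 4 →₀ ℕ), 0 ↦ 1, 1 ↦ 3 -/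
def emb24 (n : Fin 2 →₀ ℕ) : Fin 4 →₀ ℕ :=
  Finsupp.equivFunOnFinite.symm (fun t => if t = 1 then n 0 else if t = 3 then n 1 else 0)

def res42 (e : Fin 4 →₀ ℕ) : Fin 2 →₀ ℕ :=
  Finsupp.equivFunOnFinite.symm (fun i => if i = 0 then e 1 else e 3)

@[simp] lemma emb24_apply (n : Fin 2 →₀ ℕ) (t : Fin 4) :
    emb24 n t = if t = 1 then n 0 else if t = 3 then n 1 else 0 := rfl

@[simp] lemma res42_apply (e : Fin 4 →₀ ℕ) (i : Fin 2) :
    res42 e i = if i = 0 then e 1 else e 3 := rfl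

lemma res42_emb24 (n : Fin 2 →₀ ℕ) : res42 (emb24 n) = n := by
  ext i; fin_cases i <;> simp

lemma emb24_good (n : Fin 2 →₀ ℕ) : emb24 n 0 = 0 ∧ emb24 n 2 = 0 := by simp

lemma emb24_res42 (e : Fin 4 →₀ ℕ) (h : e 0 = 0 ∧ e 2 = 0) : emb24 (res42 e) = e := by
  ext t; fin_cases t <;> simp [h.1, h.2]

lemma good_of_add {u v e : Fin 4 →₀ ℕ} (hp : u + v = e) (h : e 0 = 0 ∧ e 2 = 0) :
    (u 0 = 0 ∧ u 2 = 0) ∧ (v 0 = 0 ∧ v 2 = 0) := by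
  subst hp; simp only [Finsupp.add_apply] at h ⊢; omega

lemma res42_add (u v : Fin 4 →₀ ℕ) : res42 (u + v) = res42 u + res42 v := by
  ext i; fin_cases i <;> simp

lemma emb24_add (u v : Fin 2 →₀ ℕ) : emb24 (u + v) = emb24 u + emb24 v := by
  ext t; fin_cases t <;> simp

namespace MvPowerSeries

def renFun (f : MvPowerSeries (Fin 2) ℂ) : MvPowerSeries (Fin 4) ℂ :=
  fun e => if e 0 = 0 ∧ e 2 = 0 then coeff (res42 e) f else 0

lemma coeff_renFun (f : MvPowerSeries (Fin 2) ℂ) (e : Fin 4 →₀ ℕ) :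
    coeff e (renFun f) = if e 0 = 0 ∧ e 2 = 0 then coeff (res42 e) f else 0 := rfl

lemma renFun_monomial (n : Fin 2 →₀ ℕ) (r : ℂ) :
    renFun (monomial n r) = monomial (emb24 n) r := by
  apply MvPowerSeries.ext; intro e
  rw [coeff_renFun, coeff_monomial, coeff_monomial]
  by_cases h : e 0 = 0 ∧ e 2 = 0
  · rw [if_pos h]
    by_cases h2 : res42 e = n
    · rw [if_pos h2, if_pos]; rw [← h2, emb24_res42 e h]
    · rw [if_neg h2, if_neg]; intro he; apply h2; rw [he, res42_emb24]
  · rw [if_neg h, if_neg]; intro he; apply h; rw [he]; exact emb24_good n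

def ren : MvPowerSeries (Fin 2) ℂ →+* MvPowerSeries (Fin 4) ℂ where
  toFun := renFun
  map_one' := by
    have h0 : emb24 0 = 0 := by ext t; simp
    have := renFun_monomial 0 1
    rwa [h0, monomial_zero_one, monomial_zero_one] at this
  map_zero' := by
    apply MvPowerSeries.ext; intro e
    simp [coeff_renFun]
  map_add' f g := by
    apply MvPowerSeries.ext; intro e
    simp only [coeff_renFun, map_add]
    split <;> simp
  map_mul' f g := by
    show renFun (f * g) = renFun f * renFun g
    apply MvPowerSeries.ext; intro e
    rw [coeff_renFun]
    by_cases h : e 0 = 0 ∧ e 2 = 0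
    · rw [if_pos h, coeff_mul, coeff_mul]
      refine Finset.sum_nbij' (fun q => (emb24 q.1, emb24 q.2))
        (fun p => (res42 p.1, res42 p.2)) ?_ ?_ ?_ ?_ ?_
      · rintro ⟨u, v⟩ hq
        rw [Finset.HasAntidiagonal.mem_antidiagonal] at hq ⊢
        rw [← emb24_add, hq, emb24_res42 e h]
      · rintro ⟨u, v⟩ hp
        rw [Finset.HasAntidiagonal.mem_antidiagonal] at hp ⊢
        rw [← res42_add, hp]
      · rintro ⟨u, v⟩ _
        simp only [Prod.mk.injEq]
        exact ⟨res42_emb24 u, res42_emb24 v⟩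
      · rintro ⟨u, v⟩ hp
        rw [Finset.HasAntidiagonal.mem_antidiagonal] at hp
        obtain ⟨hu, hv⟩ := good_of_add hp h
        simp only [Prod.mk.injEq]
        exact ⟨emb24_res42 u hu, emb24_res42 v hv⟩
      · rintro ⟨u, v⟩ _
        simp [coeff_renFun, emb24_good, res42_emb24]
    · rw [if_neg h, coeff_mul]
      symm
      refine Finset.sum_eq_zero fun p hp => ?_
      rw [Finset.HasAntidiagonal.mem_antidiagonal] at hp
      by_cases hu : p.1 0 = 0 ∧ p.1 2 = 0
      · by_cases hv : p.2 0 = 0 ∧ p.2 2 = 0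
        · exact absurd (by rw [← hp]; simp [Finsupp.add_apply, hu.1, hu.2, hv.1, hv.2]) h
        · simp [coeff_renFun, if_neg hv]
      · simp [coeff_renFun, if_neg hu]

end MvPowerSeries


theorem IsIntegralOverIdeal.map {R S : Type*} [CommRing R] [CommRing S] (φ : R →+* S)
    {I : Ideal R} {f : R} (hf : IsIntegralOverIdeal I f) :
    IsIntegralOverIdeal (I.map φ) (φ f) := by
  obtain ⟨m, hm, a, ha, heq⟩ := hf
  refine ⟨m, hm, fun j => φ (a j), fun j h1 h2 => ?_, ?_⟩
  · rw [← Ideal.map_pow]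
    exact Ideal.mem_map_of_mem φ (ha j h1 h2)
  · have := congrArg φ heq
    simpa only [map_add, map_sum, map_mul, map_pow, map_zero] using this

theorem IsIntegralOverIdeal.mul {R : Type*} [CommRing R] {I J : Ideal R} {c f : R}
    (hc : ∀ x ∈ I, c * x ∈ J) (hf : IsIntegralOverIdeal I f) :
    IsIntegralOverIdeal J (c * f) := by
  obtain ⟨m, hm, a, ha, heq⟩ := hf
  refine ⟨m, hm, fun j => c ^ j * a j, fun j h1 h2 => ?_, ?_⟩
  · have hK : Ideal.span {c} * I ≤ J := by
      rw [Ideal.mul_le]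
      intro r hr s hs
      obtain ⟨t, rfl⟩ := Ideal.mem_span_singleton.mp hr
      rw [mul_comm c t, mul_assoc]
      exact Ideal.mul_mem_left _ t (hc s hs)
    have h1' : c ^ j * a j ∈ (Ideal.span {c} * I) ^ j := by
      rw [mul_pow, Ideal.span_singleton_pow]
      exact Ideal.mul_mem_mul (Ideal.mem_span_singleton_self _) (ha j h1 h2)
    exact Ideal.pow_right_mono hK j h1'
  · calc (c * f) ^ m + ∑ j ∈ Finset.Icc 1 m, c ^ j * a j * (c * f) ^ (m - j)
        = c ^ m * (f ^ m + ∑ j ∈ Finset.Icc 1 m, a j * f ^ (m - j)) := by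
          rw [mul_add, Finset.mul_sum, mul_pow]
          congr 1
          refine Finset.sum_congr rfl fun j hj => ?_
          rw [Finset.mem_Icc] at hj
          have hcc : c ^ j * c ^ (m - j) = c ^ m := by rw [← pow_add]; congr 1; omega
          calc c ^ j * a j * (c * f) ^ (m - j)
              = (c ^ j * c ^ (m - j)) * (a j * f ^ (m - j)) := by rw [mul_pow]; ring
            _ = c ^ m * (a j * f ^ (m - j)) := by rw [hcc]
      _ = 0 := by rw [heq, mul_zero]

theorem IsIntegralOverIdeal.add_mem {R : Type*} [CommRing R] {I : Ideal R} {f h : R}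
    (hf : IsIntegralOverIdeal I f) (hh : h ∈ I) : IsIntegralOverIdeal I (f + h) := by
  classical
  obtain ⟨m, hm, a, ha, heq⟩ := hf
  set a0 : ℕ → R := fun j => if j = 0 then 1 else a j with ha0
  set c : ℕ → R := fun s => ∑ j ∈ Finset.range (s + 1),
    a0 j * (-h) ^ (s - j) * ((m - j).choose (s - j) : R) with hcdef
  have hrange : Finset.range (m + 1) = insert 0 (Finset.Icc 1 m) := by
    ext x; simp [Finset.mem_range, Finset.mem_Icc]; omega
  refine ⟨m, hm, c, fun s h1 h2 => ?_, ?_⟩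
  · apply Ideal.sum_mem
    intro j hj
    rw [Finset.mem_range] at hj
    have hj' : j ≤ s := by omega
    have hA : a0 j ∈ I ^ j := by
      by_cases h0 : j = 0
      · simp [ha0, h0]
      · simpa [ha0, h0] using ha j (by omega) (by omega)
    have hB : (-h) ^ (s - j) ∈ I ^ (s - j) := Ideal.pow_mem_pow (I.neg_mem hh) _
    have hAB : a0 j * (-h) ^ (s - j) ∈ I ^ s := by
      have := Ideal.mul_mem_mul hA hB
      rwa [← pow_add, Nat.add_sub_cancel' hj'] at this
    exact Ideal.mul_mem_right _ _ hAB
  · have key : ∑ s ∈ Finset.range (m + 1), c s * (f + h) ^ (m - s)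
        = ∑ j ∈ Finset.range (m + 1), a0 j * f ^ (m - j) := by
      calc ∑ s ∈ Finset.range (m + 1), c s * (f + h) ^ (m - s)
          = ∑ s ∈ Finset.range (m + 1), ∑ j ∈ Finset.range (s + 1),
              a0 j * (-h) ^ (s - j) * ((m - j).choose (s - j) : R) * (f + h) ^ (m - s) := by
            refine Finset.sum_congr rfl fun s _ => ?_
            rw [hcdef, Finset.sum_mul]
        _ = ∑ j ∈ Finset.range (m + 1), ∑ s ∈ Finset.Icc j m,
              a0 j * (-h) ^ (s - j) * ((m - j).choose (s - j) : R) * (f + h) ^ (m - s) := by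
            refine Finset.sum_comm' fun s j => ?_
            simp only [Finset.mem_range, Finset.mem_Icc]
            omega
        _ = ∑ j ∈ Finset.range (m + 1), a0 j * f ^ (m - j) := by
            refine Finset.sum_congr rfl fun j hj => ?_
            rw [Finset.mem_range] at hj
            have hjm : j ≤ m := by omega
            have : ∑ s ∈ Finset.Icc j m,
                a0 j * (-h) ^ (s - j) * ((m - j).choose (s - j) : R) * (f + h) ^ (m - s)
                = ∑ i ∈ Finset.range (m - j + 1),
                  a0 j * ((-h) ^ i * (f + h) ^ (m - j - i) * ((m - j).choose i : R)) := by
              rw [show Finset.Icc j m = Finset.Ico j (m + 1) by rfl, Finset.sum_Ico_eq_sum_range]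
              rw [show m + 1 - j = m - j + 1 by omega]
              refine Finset.sum_congr rfl fun i hi => ?_
              rw [Finset.mem_range] at hi
              rw [show j + i - j = i by omega, show m - (j + i) = m - j - i by omega]
              ring
            rw [this, ← Finset.mul_sum, ← Commute.add_pow (Commute.all _ _),
              show -h + (f + h) = f by ring]
    have hc0 : c 0 = 1 := by simp [hcdef, ha0]
    have lhs : (f + h) ^ m + ∑ s ∈ Finset.Icc 1 m, c s * (f + h) ^ (m - s)
        = ∑ s ∈ Finset.range (m + 1), c s * (f + h) ^ (m - s) := by
      rw [hrange, Finset.sum_insert (by simp), hc0]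
      simp
    have rhs : ∑ j ∈ Finset.range (m + 1), a0 j * f ^ (m - j)
        = f ^ m + ∑ j ∈ Finset.Icc 1 m, a j * f ^ (m - j) := by
      rw [hrange, Finset.sum_insert (by simp)]
      have : a0 0 = 1 := by simp [ha0]
      rw [this]
      simp only [Nat.sub_zero, one_mul]
      congr 1
      refine Finset.sum_congr rfl fun j hj => ?_
      rw [Finset.mem_Icc] at hj
      rw [ha0]
      simp only []
      rw [if_neg (by omega)]
    rw [lhs, key, rhs, heq]


namespace MvPowerSeries

lemma ren_X0 : ren (X (0 : Fin 2)) = (X (1 : Fin 4) : MvPowerSeries (Fin 4) ℂ) := by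
  show renFun (X 0) = X 1
  have hone : emb24 (Finsupp.single 0 1) = Finsupp.single (1 : Fin 4) 1 := by
    ext t; fin_cases t <;> simp [Finsupp.single_apply]
  rw [X_def, X_def, renFun_monomial, hone]

lemma ren_X1 : ren (X (1 : Fin 2)) = (X (3 : Fin 4) : MvPowerSeries (Fin 4) ℂ) := by
  show renFun (X 1) = X 3
  have hone : emb24 (Finsupp.single 1 1) = Finsupp.single (3 : Fin 4) 1 := by
    ext t; fin_cases t <;> simp [Finsupp.single_apply]
  rw [X_def, X_def, renFun_monomial, hone]

end MvPowerSeries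

open MvPowerSeries in
/-- Key step in the saturation computation for `y^N - x^{αN} z^β = 0`: if `x_2^b - y_2^b` is
integral over `⟨x_2^β - y_2^β, x_2^N - y_2^N⟩` in `ℂ[[x_2,y_2]]` (the two-variable power
series ring, `x_2 = X 0`, `y_2 = X 1`), then `x_1^α x_2^b - y_1^α y_2^b` is integral over
`I_Δ = ⟨x_1 - y_1, x_1^α x_2^β - y_1^α y_2^β, x_2^N - y_2^N⟩` in `ℂ[[x_1,x_2,y_1,y_2]]`
(variables `x_1 = X 0`, `x_2 = X 1`, `y_1 = X 2`, `y_2 = X 3`). -/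
theorem sufficiency_step_hypersurface (α β N b : ℕ)
    (hα : 1 ≤ α) (hβ : 1 ≤ β) (hN : 1 ≤ N)
    (J : Ideal (MvPowerSeries (Fin 2) ℂ))
    (hJ : J = Ideal.span {X 0 ^ β - X 1 ^ β, X 0 ^ N - X 1 ^ N})
    (IΔ : Ideal (MvPowerSeries (Fin 4) ℂ))
    (hIΔ : IΔ = Ideal.span {X 0 - X 2, X 0 ^ α * X 1 ^ β - X 2 ^ α * X 3 ^ β,
      X 1 ^ N - X 3 ^ N})
    (hb : IsIntegralOverIdeal J (X 0 ^ b - X 1 ^ b)) :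
    IsIntegralOverIdeal IΔ (X 0 ^ α * X 1 ^ b - X 2 ^ α * X 3 ^ b) := by
  -- generators of IΔ
  have d1 : X 0 - X 2 ∈ IΔ := by
    rw [hIΔ]; exact Ideal.subset_span (by simp)
  have d2 : X 0 ^ α * X 1 ^ β - X 2 ^ α * X 3 ^ β ∈ IΔ := by
    rw [hIΔ]; exact Ideal.subset_span (by simp)
  have d3 : (X 1 ^ N - X 3 ^ N : MvPowerSeries (Fin 4) ℂ) ∈ IΔ := by
    rw [hIΔ]; exact Ideal.subset_span (by simp)
  have dpow : (X 0 ^ α - X 2 ^ α : MvPowerSeries (Fin 4) ℂ) ∈ IΔ := by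
    obtain ⟨t, ht⟩ := sub_dvd_pow_sub_pow (X 0 : MvPowerSeries (Fin 4) ℂ) (X 2) α
    rw [ht]
    exact Ideal.mul_mem_right _ _ d1
  set J4 : Ideal (MvPowerSeries (Fin 4) ℂ) :=
    Ideal.span {X 1 ^ β - X 3 ^ β, X 1 ^ N - X 3 ^ N} with hJ4
  -- transport hb along `ren`
  have hmap : IsIntegralOverIdeal (J.map ren) (ren (X 0 ^ b - X 1 ^ b)) :=
    IsIntegralOverIdeal.map ren hb
  have hrb : ren (X 0 ^ b - X 1 ^ b) = (X 1 ^ b - X 3 ^ b : MvPowerSeries (Fin 4) ℂ) := by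
    rw [map_sub, map_pow, map_pow, ren_X0, ren_X1]
  have hJm : J.map ren = J4 := by
    rw [hJ, Ideal.map_span, Set.image_insert_eq, Set.image_singleton, hJ4,
      map_sub, map_sub, map_pow, map_pow, map_pow, map_pow, ren_X0, ren_X1]
  rw [hrb, hJm] at hmap
  -- multiply by X 0 ^ α
  have g2 : (X 0 ^ α * (X 1 ^ β - X 3 ^ β) : MvPowerSeries (Fin 4) ℂ) ∈ IΔ := by
    have he : (X 0 ^ α * (X 1 ^ β - X 3 ^ β) : MvPowerSeries (Fin 4) ℂ)
        = (X 0 ^ α * X 1 ^ β - X 2 ^ α * X 3 ^ β) - (X 0 ^ α - X 2 ^ α) * X 3 ^ β := by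
      ring
    rw [he]
    exact Ideal.sub_mem _ d2 (Ideal.mul_mem_right _ _ dpow)
  have g3 : (X 0 ^ α * (X 1 ^ N - X 3 ^ N) : MvPowerSeries (Fin 4) ℂ) ∈ IΔ :=
    Ideal.mul_mem_left _ _ d3
  have hc : ∀ x ∈ J4, (X 0 ^ α : MvPowerSeries (Fin 4) ℂ) * x ∈ IΔ := by
    intro x hx
    rw [hJ4] at hx
    obtain ⟨r, s, hrs⟩ := Ideal.mem_span_pair.mp hx
    have : (X 0 ^ α : MvPowerSeries (Fin 4) ℂ) * x
        = r * (X 0 ^ α * (X 1 ^ β - X 3 ^ β)) + s * (X 0 ^ α * (X 1 ^ N - X 3 ^ N)) := by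
      rw [← hrs]; ring
    rw [this]
    exact Ideal.add_mem _ (Ideal.mul_mem_left _ _ g2) (Ideal.mul_mem_left _ _ g3)
  have hmul : IsIntegralOverIdeal IΔ ((X 0 ^ α : MvPowerSeries (Fin 4) ℂ) * (X 1 ^ b - X 3 ^ b)) :=
    IsIntegralOverIdeal.mul hc hmap
  -- translate by an element of IΔ
  have h4 : ((X 0 ^ α - X 2 ^ α) * X 3 ^ b : MvPowerSeries (Fin 4) ℂ) ∈ IΔ :=
    Ideal.mul_mem_right _ _ dpow
  have hfinal := hmul.add_mem h4
  have he : (X 0 ^ α * (X 1 ^ b - X 3 ^ b) + (X 0 ^ α - X 2 ^ α) * X 3 ^ b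
      : MvPowerSeries (Fin 4) ℂ) = X 0 ^ α * X 1 ^ b - X 2 ^ α * X 3 ^ b := by
    ring
  rwa [he] at hfinal
end
end

section
/- Let α ≥ 1, β ≥ 1 and N ≥ 2 be integers, and in ℂ[[x_1,x_2,y_1,y_2]] let I_Δ be the ideal generated by x_1 − y_1, x_1^α x_2^β − y_1^α y_2^β and x_2^N − y_2^N. Then for every integer k ≥ 1 such that N does not divide k, the element x_2^k − y_2^k is NOT integral over I_Δ. -/
open Finset Finsupp

namespace PPNI

variable (e : Fin 4 → ℕ) (he : ∀ i, e i ≠ 0) (c : Fin 4 → ℂ)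

noncomputable def D (n : ℕ) : Finset (Fin 4 →₀ ℕ) :=
  Set.Finite.toFinset
    ((Finsupp.finite_of_nat_weight_le e he n).subset
      (fun d (hd : d ∈ {d : Fin 4 →₀ ℕ | weight e d = n}) => le_of_eq hd))

lemma mem_D {n : ℕ} {d : Fin 4 →₀ ℕ} : d ∈ D e he n ↔ weight e d = n := by
  simp [D]

lemma P_add (u v : Fin 4 →₀ ℕ) :
    (∏ i, c i ^ (u + v) i) = (∏ i, c i ^ u i) * (∏ i, c i ^ v i) := by
  simp [Finsupp.add_apply, pow_add, Finset.prod_mul_distrib]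

lemma partition {β : Type*} [AddCommMonoid β] (n : ℕ)
    (F : (Fin 4 →₀ ℕ) × (Fin 4 →₀ ℕ) → β) :
    ∑ d ∈ D e he n, ∑ uv ∈ antidiagonal d, F uv =
      ∑ pq ∈ antidiagonal n, ∑ uv ∈ (D e he pq.1) ×ˢ (D e he pq.2), F uv := by
  rw [Finset.sum_sigma' (D e he n) (fun d => antidiagonal d) (fun _ uv => F uv),
    Finset.sum_sigma' (antidiagonal n) (fun pq => (D e he pq.1) ×ˢ (D e he pq.2))
      (fun _ uv => F uv)]
  refine Finset.sum_nbij' (fun x => ⟨(weight e x.2.1, weight e x.2.2), x.2⟩)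
    (fun y => ⟨y.2.1 + y.2.2, y.2⟩) ?_ ?_ ?_ ?_ ?_
  · rintro ⟨d, uv⟩ hx
    simp only [Finset.mem_sigma, mem_D, Finset.HasAntidiagonal.mem_antidiagonal, Finset.mem_product] at hx ⊢
    exact ⟨by rw [← map_add, hx.2, hx.1], trivial, trivial⟩
  · rintro ⟨pq, uv⟩ hy
    simp only [Finset.mem_sigma, Finset.HasAntidiagonal.mem_antidiagonal, Finset.mem_product, mem_D] at hy ⊢
    exact ⟨by rw [map_add, hy.2.1, hy.2.2, hy.1], trivial⟩
  · rintro ⟨d, uv⟩ hx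
    simp only [Finset.mem_sigma, mem_D, Finset.HasAntidiagonal.mem_antidiagonal] at hx
    exact congrArg (fun m => (⟨m, uv⟩ : Σ _ : Fin 4 →₀ ℕ, (Fin 4 →₀ ℕ) × (Fin 4 →₀ ℕ))) hx.2
  · rintro ⟨pq, uv⟩ hy
    simp only [Finset.mem_sigma, Finset.HasAntidiagonal.mem_antidiagonal, Finset.mem_product, mem_D] at hy
    have : (weight e uv.1, weight e uv.2) = pq := by
      rw [hy.2.1, hy.2.2]
    exact congrArg (fun p => (⟨p, uv⟩ : Σ _ : ℕ × ℕ, (Fin 4 →₀ ℕ) × (Fin 4 →₀ ℕ))) this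
  · rintro ⟨d, uv⟩ _
    rfl

noncomputable def phi : MvPowerSeries (Fin 4) ℂ →+* PowerSeries ℂ where
  toFun f := PowerSeries.mk fun n =>
    ∑ d ∈ D e he n, MvPowerSeries.coeff d f * ∏ i, c i ^ d i
  map_zero' := by
    ext n
    simp
  map_one' := by
    ext n
    simp only [PowerSeries.coeff_mk, MvPowerSeries.coeff_one, ite_mul, one_mul, zero_mul]
    rw [Finset.sum_ite_eq' (D e he n) 0 (fun d => ∏ i, c i ^ d i)]
    simp only [mem_D, map_zero, Finsupp.coe_zero, Pi.zero_apply, pow_zero,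
      Finset.prod_const_one, PowerSeries.coeff_one]
    by_cases hn : n = 0 <;> simp [hn, eq_comm]
  map_add' f g := by
    ext n
    simp [add_mul, Finset.sum_add_distrib]
  map_mul' f g := by
    ext n
    simp only [PowerSeries.coeff_mk, PowerSeries.coeff_mul]
    calc ∑ d ∈ D e he n, MvPowerSeries.coeff d (f * g) * ∏ i, c i ^ d i
        = ∑ d ∈ D e he n, ∑ uv ∈ antidiagonal d,
            (MvPowerSeries.coeff uv.1 f * ∏ i, c i ^ uv.1 i) *
            (MvPowerSeries.coeff uv.2 g * ∏ i, c i ^ uv.2 i) := by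
          refine Finset.sum_congr rfl fun d _ => ?_
          rw [MvPowerSeries.coeff_mul, Finset.sum_mul]
          refine Finset.sum_congr rfl fun uv huv => ?_
          rw [Finset.HasAntidiagonal.mem_antidiagonal] at huv
          rw [← huv, P_add]
          ring
      _ = ∑ pq ∈ antidiagonal n, ∑ uv ∈ (D e he pq.1) ×ˢ (D e he pq.2),
            (MvPowerSeries.coeff uv.1 f * ∏ i, c i ^ uv.1 i) *
            (MvPowerSeries.coeff uv.2 g * ∏ i, c i ^ uv.2 i) := partition e he n _
      _ = ∑ pq ∈ antidiagonal n,
            (∑ u ∈ D e he pq.1, MvPowerSeries.coeff u f * ∏ i, c i ^ u i) *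
            (∑ v ∈ D e he pq.2, MvPowerSeries.coeff v g * ∏ i, c i ^ v i) := by
          refine Finset.sum_congr rfl fun pq _ => ?_
          rw [Finset.sum_mul_sum, Finset.sum_product]

lemma phi_X (i : Fin 4) :
    phi e he c (MvPowerSeries.X i) = PowerSeries.C (c i) * PowerSeries.X ^ (e i) := by
  ext n
  simp only [phi, RingHom.coe_mk, MonoidHom.coe_mk, OneHom.coe_mk, PowerSeries.coeff_mk,
    MvPowerSeries.coeff_X, ite_mul, one_mul, zero_mul]
  rw [Finset.sum_ite_eq' (D e he n) (Finsupp.single i 1) (fun d => ∏ j, c j ^ d j)]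
  have hw : weight e (Finsupp.single i 1) = e i := by
    rw [weight_apply, Finsupp.sum_single_index] <;> simp
  have hP : (∏ j, c j ^ (Finsupp.single i 1) j) = c i := by
    simp only [Finsupp.single_apply, pow_ite, pow_one, pow_zero]
    simp [Finset.prod_ite_eq]
  rw [PowerSeries.coeff_C_mul, PowerSeries.coeff_X_pow]
  simp only [mem_D, hw, hP]
  by_cases hn : n = e i <;> simp [hn, eq_comm]

end PPNI


set_option maxHeartbeats 1000000 in
open MvPowerSeries in
/-- In `ℂ[[x_1,x_2,y_1,y_2]]` (variables `x_1 = X 0`, `x_2 = X 1`, `y_1 = X 2`, `y_2 = X 3`)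
with `I_Δ = ⟨x_1 - y_1, x_1^α x_2^β - y_1^α y_2^β, x_2^N - y_3^N⟩`, for every `k ≥ 1` not
divisible by `N` the element `x_2^k - y_2^k` is not integral over `I_Δ`. -/
theorem pure_power_not_integral (α β N : ℕ)
    (hα : 1 ≤ α) (hβ : 1 ≤ β) (hN : 2 ≤ N)
    (IΔ : Ideal (MvPowerSeries (Fin 4) ℂ))
    (hIΔ : IΔ = Ideal.span {X 0 - X 2, X 0 ^ α * X 1 ^ β - X 2 ^ α * X 3 ^ β,
      X 1 ^ N - X 3 ^ N}) :
    ∀ k : ℕ, 1 ≤ k → ¬ N ∣ k →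
      ¬ IsIntegralOverIdeal IΔ (X 1 ^ k - X 3 ^ k) := by
  intro k hk hNk hint
  obtain ⟨m, hm, a, ha, heq⟩ := hint
  set θ : ℂ := Complex.exp (2 * Real.pi * Complex.I / N) with hθdef
  have hθ : IsPrimitiveRoot θ N := Complex.isPrimitiveRoot_exp N (by omega)
  set e : Fin 4 → ℕ := ![k+1, 1, k+2, 1] with hedef
  have he : ∀ i, e i ≠ 0 := by intro i; fin_cases i <;> simp [hedef]
  set c : Fin 4 → ℂ := ![1, 1, 1, θ] with hcdef
  set Φ := PPNI.phi e he c with hΦ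
  have hX : ∀ i, Φ (MvPowerSeries.X i) = PowerSeries.C (c i) * PowerSeries.X ^ (e i) :=
    PPNI.phi_X e he c
  have hc0 : c 0 = 1 := rfl
  have hc1 : c 1 = 1 := rfl
  have hc2 : c 2 = 1 := rfl
  have hc3 : c 3 = θ := rfl
  have he0 : e 0 = k + 1 := rfl
  have he1 : e 1 = 1 := rfl
  have he2 : e 2 = k + 2 := rfl
  have he3 : e 3 = 1 := rfl
  set T : PowerSeries ℂ := PowerSeries.X with hT
  -- image of the ideal
  have hmapI : Ideal.map Φ IΔ ≤ Ideal.span {T ^ (k+1)} := by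
    rw [hIΔ, Ideal.map_span, Ideal.span_le]
    rintro _ ⟨g, hg, rfl⟩
    simp only [Set.mem_insert_iff, Set.mem_singleton_iff] at hg
    rw [SetLike.mem_coe, Ideal.mem_span_singleton]
    rcases hg with rfl | rfl | rfl
    · rw [map_sub, hX, hX, hc0, hc2, he0, he2, map_one, one_mul, one_mul]
      exact dvd_sub dvd_rfl (pow_dvd_pow T (by omega))
    · rw [map_sub, map_mul, map_mul, map_pow, map_pow, map_pow, map_pow,
        hX, hX, hX, hX, hc0, hc1, hc2, hc3, he0, he1, he2, he3]
      simp only [map_one, one_mul, pow_one]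
      refine dvd_sub ?_ ?_
      · exact dvd_mul_of_dvd_left (dvd_pow dvd_rfl (by omega)) _
      · exact dvd_mul_of_dvd_left (dvd_pow (pow_dvd_pow T (by omega)) (by omega)) _
    · rw [map_sub, map_pow, map_pow, hX, hX, hc1, hc3, he1, he3]
      simp only [map_one, one_mul, pow_one]
      rw [mul_pow, ← map_pow, hθ.pow_eq_one, map_one, one_mul, sub_self]
      exact dvd_zero _
  have hphia : ∀ j, 1 ≤ j → j ≤ m → T ^ ((k+1)*j) ∣ Φ (a j) := by
    intro j h1 h2
    have hmem : Φ (a j) ∈ (Ideal.span {T ^ (k+1)}) ^ j := by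
      have h3 := Ideal.mem_map_of_mem Φ (ha j h1 h2)
      rw [Ideal.map_pow] at h3
      exact Ideal.pow_right_mono hmapI j h3
    rwa [Ideal.span_singleton_pow, Ideal.mem_span_singleton, ← pow_mul] at hmem
  have hf : Φ (X 1 ^ k - X 3 ^ k) = PowerSeries.C (1 - θ^k) * T ^ k := by
    rw [map_sub, map_pow, map_pow, hX, hX, hc1, hc3, he1, he3]
    simp only [map_one, one_mul, pow_one]
    rw [mul_pow, ← map_pow, map_sub, map_one, sub_mul, one_mul]
  -- apply Φ and take the coefficient of T^(k*m)
  have H : (PowerSeries.C (1 - θ^k) * T ^ k) ^ m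
      + ∑ j ∈ Finset.Icc 1 m, Φ (a j) * (PowerSeries.C (1 - θ^k) * T ^ k) ^ (m - j) = 0 := by
    have h4 := congrArg Φ heq
    rw [map_add, map_pow, map_sum, map_zero, hf] at h4
    convert h4 using 2
    refine Finset.sum_congr rfl fun j _ => ?_
    rw [map_mul, map_pow, hf]
  have H3 := congrArg (PowerSeries.coeff (k*m)) H
  rw [map_add, map_sum, map_zero] at H3
  have hterm0 : ∀ j ∈ Finset.Icc 1 m,
      PowerSeries.coeff (k*m) (Φ (a j) * (PowerSeries.C (1 - θ^k) * T ^ k) ^ (m - j)) = 0 := by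
    intro j hj
    rw [Finset.mem_Icc] at hj
    have hd : T ^ (k*m + 1) ∣ Φ (a j) * (PowerSeries.C (1 - θ^k) * T ^ k) ^ (m - j) := by
      have d1 : T ^ ((k+1)*j) ∣ Φ (a j) := hphia j hj.1 hj.2
      have d2 : T ^ (k*(m-j)) ∣ (PowerSeries.C (1 - θ^k) * T ^ k) ^ (m - j) := by
        rw [mul_pow, ← pow_mul]
        exact dvd_mul_left _ _
      have d3 := mul_dvd_mul d1 d2
      rw [← pow_add] at d3
      refine dvd_trans (pow_dvd_pow T ?_) d3
      have e1 : k*(m-j) + k*j = k*m := by rw [← Nat.mul_add, Nat.sub_add_cancel hj.2]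
      have e2 : (k+1)*j = k*j + j := by ring
      omega
    exact PowerSeries.X_pow_dvd_iff.mp hd (k*m) (by omega)
  rw [Finset.sum_eq_zero hterm0, add_zero, mul_pow, ← map_pow, ← pow_mul,
    PowerSeries.coeff_C_mul, PowerSeries.coeff_X_pow] at H3
  rw [if_pos rfl, mul_one] at H3
  have h5 : (1 : ℂ) - θ^k = 0 := pow_eq_zero_iff (by omega : m ≠ 0) |>.mp H3
  have h6 : θ^k = 1 := (sub_eq_zero.mp h5).symm
  exact hNk ((hθ.pow_eq_one_iff_dvd k).mp h6)
end

section
/- Let α ≥ 2, β ≥ 1 and N ≥ 2 be integers with gcd(β, N) = 1, and in ℂ[[x_1,x_2,y_1,y_2]] let I_Δ be the ideal generated by x_1 − y_1, x_1^α x_2^β − y_1^α y_2^β and x_2^N − y_2^N. Then for all integers a, b with 0 < a < α and N not dividing b, the element x_1^a x_2^b − y_1^a y_2^b is NOT integral over I_Δ. -/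
noncomputable section ArcSubst

open Finsupp

variable {σ : Type*} [Fintype σ] [DecidableEq σ] (w : σ → ℕ) (hw : ∀ s, w s ≠ 0) (c : σ → ℂ)

/-- The finset of exponents of weight exactly `n`. -/
def wS (n : ℕ) : Finset (σ →₀ ℕ) :=
  (Finsupp.finite_of_nat_weight_le w hw n).toFinset.filter (fun e => weight w e = n)

lemma mem_wS {n : ℕ} {e : σ →₀ ℕ} : e ∈ wS w hw n ↔ weight w e = n := by
  constructor
  · intro h
    exact (Finset.mem_filter.mp h).2
  · intro h
    exact Finset.mem_filter.mpr ⟨(Finsupp.finite_of_nat_weight_le w hw n).mem_toFinset.mpr h.le, h⟩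

/-- The scaling factor of a monomial. -/
def wmon (e : σ →₀ ℕ) : ℂ := e.prod fun s k => c s ^ k

lemma wmon_add (u v : σ →₀ ℕ) : wmon c (u + v) = wmon c u * wmon c v :=
  Finsupp.prod_add_index' (fun s => pow_zero (c s)) (fun s k l => pow_add (c s) k l)

lemma wmon_zero : wmon c 0 = 1 := Finsupp.prod_zero_index

lemma wmon_single (s : σ) : wmon c (Finsupp.single s 1) = c s := by
  simp [wmon]

lemma weight_single_one (s : σ) : weight w (Finsupp.single s 1) = w s := by
  rw [weight_apply, Finsupp.sum_single_index] <;> simp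

/-- The underlying function of the substitution homomorphism `X s ↦ c s • t ^ w s`. -/
def wsubFun (F : MvPowerSeries σ ℂ) : PowerSeries ℂ :=
  PowerSeries.mk fun n => ∑ e ∈ wS w hw n, wmon c e * MvPowerSeries.coeff e F

lemma wsubFun_mul (F G : MvPowerSeries σ ℂ) :
    wsubFun w hw c (F * G) = wsubFun w hw c F * wsubFun w hw c G := by
  ext n
  rw [PowerSeries.coeff_mul]
  simp only [wsubFun, PowerSeries.coeff_mk]
  -- summand over pairs
  set h : (σ →₀ ℕ) × (σ →₀ ℕ) → ℂ := fun p =>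
    (wmon c p.1 * MvPowerSeries.coeff p.1 F) * (wmon c p.2 * MvPowerSeries.coeff p.2 G) with hh
  have hdisj1 : (↑(wS w hw n) : Set (σ →₀ ℕ)).PairwiseDisjoint
      (fun e => Finset.HasAntidiagonal.antidiagonal e) := by
    intro e _ e' _ hne
    apply Finset.disjoint_left.mpr
    intro p hp hp'
    exact hne ((Finset.HasAntidiagonal.mem_antidiagonal.mp hp).symm.trans (Finset.HasAntidiagonal.mem_antidiagonal.mp hp'))
  have hdisj2 : (↑(Finset.HasAntidiagonal.antidiagonal n) : Set (ℕ × ℕ)).PairwiseDisjoint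
      (fun q => wS w hw q.1 ×ˢ wS w hw q.2) := by
    intro q _ q' _ hne
    apply Finset.disjoint_left.mpr
    intro p hp hp'
    apply hne
    rw [Finset.mem_product] at hp hp'
    have h1 := (mem_wS w hw).mp hp.1
    have h2 := (mem_wS w hw).mp hp.2
    have h1' := (mem_wS w hw).mp hp'.1
    have h2' := (mem_wS w hw).mp hp'.2
    exact Prod.ext (h1 ▸ h1') (h2 ▸ h2')
  have hL : ∑ e ∈ wS w hw n, wmon c e * MvPowerSeries.coeff e (F * G) =
      ∑ p ∈ (wS w hw n).biUnion (fun e => Finset.HasAntidiagonal.antidiagonal e), h p := by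
    rw [Finset.sum_biUnion hdisj1]
    refine Finset.sum_congr rfl fun e he => ?_
    rw [MvPowerSeries.coeff_mul, Finset.mul_sum]
    refine Finset.sum_congr rfl fun p hp => ?_
    have hpe : p.1 + p.2 = e := Finset.HasAntidiagonal.mem_antidiagonal.mp hp
    rw [hh]
    simp only [← hpe, wmon_add]
    ring
  have hR : ∑ q ∈ Finset.HasAntidiagonal.antidiagonal n,
      (∑ e ∈ wS w hw q.1, wmon c e * MvPowerSeries.coeff e F) *
        (∑ e ∈ wS w hw q.2, wmon c e * MvPowerSeries.coeff e G) =
      ∑ p ∈ (Finset.HasAntidiagonal.antidiagonal n).biUnion (fun q => wS w hw q.1 ×ˢ wS w hw q.2), h p := by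
    rw [Finset.sum_biUnion hdisj2]
    refine Finset.sum_congr rfl fun q _ => ?_
    rw [Finset.sum_mul_sum, Finset.sum_product]
  have hsets : (wS w hw n).biUnion (fun e => Finset.HasAntidiagonal.antidiagonal e) =
      (Finset.HasAntidiagonal.antidiagonal n).biUnion (fun q => wS w hw q.1 ×ˢ wS w hw q.2) := by
    ext p
    simp only [Finset.mem_biUnion, Finset.HasAntidiagonal.mem_antidiagonal, Finset.mem_product, mem_wS]
    constructor
    · rintro ⟨e, he, hpe⟩
      exact ⟨(weight w p.1, weight w p.2), by rw [← map_add, hpe, he], rfl, rfl⟩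
    · rintro ⟨q, hq, h1, h2⟩
      exact ⟨p.1 + p.2, by rw [map_add, h1, h2, hq], rfl⟩
  rw [hL, hR, hsets]

/-- The substitution homomorphism `X s ↦ c s • t ^ w s` on multivariate power series. -/
def wsub : MvPowerSeries σ ℂ →+* PowerSeries ℂ where
  toFun := wsubFun w hw c
  map_one' := by
    ext n
    simp only [wsubFun, PowerSeries.coeff_mk, MvPowerSeries.coeff_one, PowerSeries.coeff_one,
      mul_ite, mul_one, mul_zero, Finset.sum_ite_eq' (wS w hw n) 0 (fun e => wmon c e)]
    have h0 : (0 : σ →₀ ℕ) ∈ wS w hw n ↔ weight w (0 : σ →₀ ℕ) = n := mem_wS w hw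
    rw [map_zero] at h0
    by_cases h : n = 0
    · subst h
      simp [h0, wmon_zero]
    · have h0n : ¬ ((0 : ℕ) = n) := fun hh => h hh.symm
      simp [h0, h, h0n, wmon_zero]
  map_mul' := wsubFun_mul w hw c
  map_zero' := by
    ext n
    simp [wsubFun]
  map_add' := fun F G => by
    ext n
    simp [wsubFun, mul_add, Finset.sum_add_distrib]

lemma wsub_monomial (e : σ →₀ ℕ) (r : ℂ) :
    wsub w hw c (MvPowerSeries.monomial e r) =
      PowerSeries.monomial (weight w e) (wmon c e * r) := by
  ext n
  simp only [wsub, RingHom.coe_mk, MonoidHom.coe_mk, OneHom.coe_mk, wsubFun,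
    PowerSeries.coeff_mk, MvPowerSeries.coeff_monomial, PowerSeries.coeff_monomial,
    mul_ite, mul_zero, Finset.sum_ite_eq' (wS w hw n) e (fun e' => wmon c e' * r)]
  have he : e ∈ wS w hw n ↔ weight w e = n := mem_wS w hw
  by_cases h : weight w e = n
  · simp [he, h]
  · have h' : ¬ (n = weight w e) := fun hh => h hh.symm
    simp [he, h, h']

lemma wsub_X (s : σ) :
    wsub w hw c (MvPowerSeries.X s) = PowerSeries.C (c s) * PowerSeries.X ^ (w s) := by
  have hX : (MvPowerSeries.X s : MvPowerSeries σ ℂ) =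
      MvPowerSeries.monomial (Finsupp.single s 1) 1 := rfl
  rw [hX, wsub_monomial, weight_single_one, wmon_single, mul_one]
  ext n
  simp only [PowerSeries.coeff_monomial, PowerSeries.coeff_C_mul, PowerSeries.coeff_X_pow,
    mul_ite, mul_one, mul_zero]

end ArcSubst

open MvPowerSeries in
/-- In `ℂ[[x_1,x_2,y_1,y_2]]` (variables `x_1 = X 0`, `x_2 = X 1`, `y_1 = X 2`, `y_2 = X 3`)
with `I_Δ = ⟨x_1 - y_1, x_1^α x_2^β - y_1^α y_2^β, x_2^N - y_2^N⟩`, `gcd(β,N) = 1`: for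
`0 < a < α` and `N ∤ b` the element `x_1^a x_2^b - y_1^a y_2^b` is not integral over `I_Δ`. -/
theorem mixed_power_not_integral (α β N : ℕ)
    (hα : 2 ≤ α) (hβ : 1 ≤ β) (hN : 2 ≤ N) (hgcd : Nat.gcd β N = 1)
    (IΔ : Ideal (MvPowerSeries (Fin 4) ℂ))
    (hIΔ : IΔ = Ideal.span {X 0 - X 2, X 0 ^ α * X 1 ^ β - X 2 ^ α * X 3 ^ β,
      X 1 ^ N - X 3 ^ N}) :
    ∀ a b : ℕ, 0 < a → a < α → ¬ N ∣ b →
      ¬ IsIntegralOverIdeal IΔ (X 0 ^ a * X 1 ^ b - X 2 ^ a * X 3 ^ b) := by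
  intro a b ha haα hNb hint
  classical
  -- the primitive N-th root of unity
  set θ : ℂ := Complex.exp (2 * Real.pi * Complex.I / N) with hθdef
  have hθ : IsPrimitiveRoot θ N := Complex.isPrimitiveRoot_exp N (by omega)
  have hθN : θ ^ N = 1 := hθ.pow_eq_one
  have hθb : θ ^ b ≠ 1 := fun h => hNb ((hθ.pow_eq_one_iff_dvd b).mp h)
  -- the arc data
  set k : ℕ := b + 1 with hk
  set w : Fin 4 → ℕ := ![k, 1, k, 1] with hwdef
  have hw : ∀ s, w s ≠ 0 := by
    intro s
    fin_cases s <;> simp [hwdef, hk]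
  set c : Fin 4 → ℂ := ![1, 1, 1, θ] with hcdef
  set φ := wsub w hw c with hφ
  set t : PowerSeries ℂ := PowerSeries.X with ht
  have hX0 : φ (X 0) = t ^ k := by
    rw [hφ, wsub_X]; simp [hwdef, hcdef, ht]
  have hX1 : φ (X 1) = t := by
    rw [hφ, wsub_X]; simp [hwdef, hcdef, ht]
  have hX2 : φ (X 2) = t ^ k := by
    rw [hφ, wsub_X]; simp [hwdef, hcdef, ht]
  have hX3 : φ (X 3) = PowerSeries.C θ * t := by
    rw [hφ, wsub_X]; simp [hwdef, hcdef, ht]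
  set d : ℕ := a * k + b with hd
  -- image of f
  have hf : φ (X 0 ^ a * X 1 ^ b - X 2 ^ a * X 3 ^ b) =
      (1 - PowerSeries.C (θ ^ b)) * t ^ d := by
    rw [map_sub, map_mul, map_mul, map_pow, map_pow, map_pow, map_pow,
      hX0, hX1, hX2, hX3, mul_pow, ← map_pow, hd]
    ring
  -- the image ideal is contained in (t^(d+1))
  have hmap : Ideal.map φ IΔ ≤ Ideal.span {t ^ (d + 1)} := by
    rw [hIΔ, Ideal.map_span]
    refine Ideal.span_le.mpr ?_
    rintro x hx
    simp only [Set.image_insert_eq, Set.image_singleton, Set.mem_insert_iff,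
      Set.mem_singleton_iff] at hx
    rcases hx with hx | hx | hx <;> subst hx
    · rw [map_sub, hX0, hX2, sub_self]
      exact Ideal.zero_mem _
    · rw [map_sub, map_mul, map_mul, map_pow, map_pow, map_pow, map_pow,
        hX0, hX1, hX2, hX3, mul_pow, ← map_pow]
      have h1 : (t ^ k) ^ α * t ^ β - (t ^ k) ^ α * (PowerSeries.C (θ ^ β) * t ^ β) =
          (1 - PowerSeries.C (θ ^ β)) * t ^ (α * k + β) := by ring
      rw [h1]
      refine Ideal.mem_span_singleton.mpr (Dvd.dvd.mul_left ?_ _)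
      refine pow_dvd_pow t ?_
      have h1 : d + 1 = (a + 1) * k := by rw [hd, hk]; ring
      have h2 : (a + 1) * k ≤ α * k := Nat.mul_le_mul_right k haα
      calc d + 1 = (a + 1) * k := h1
        _ ≤ α * k := h2
        _ ≤ α * k + β := Nat.le_add_right _ _
    · rw [map_sub, map_pow, map_pow, hX1, hX3, mul_pow, ← map_pow, hθN, map_one, one_mul,
        sub_self]
      exact Ideal.zero_mem _
  -- unpack the integral equation
  obtain ⟨m, hm, aj, haj, heq⟩ := hint
  -- push through φ
  have heqφ : φ (X 0 ^ a * X 1 ^ b - X 2 ^ a * X 3 ^ b) ^ m +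
      ∑ j ∈ Finset.Icc 1 m, φ (aj j) * φ (X 0 ^ a * X 1 ^ b - X 2 ^ a * X 3 ^ b) ^ (m - j) = 0 := by
    have := congrArg φ heq
    simpa only [map_add, map_pow, map_sum, map_mul, map_zero] using this
  -- take the coefficient of t^(d*m)
  have hc1 : PowerSeries.coeff (d * m) (φ (X 0 ^ a * X 1 ^ b - X 2 ^ a * X 3 ^ b) ^ m) =
      (1 - θ ^ b) ^ m := by
    rw [hf, mul_pow, ← pow_mul, PowerSeries.coeff_mul_X_pow', if_pos le_rfl, Nat.sub_self]
    rw [PowerSeries.coeff_zero_eq_constantCoeff, map_pow, map_sub, map_one,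
      PowerSeries.constantCoeff_C]
  have hc2 : ∀ j ∈ Finset.Icc 1 m, PowerSeries.coeff (d * m)
      (φ (aj j) * φ (X 0 ^ a * X 1 ^ b - X 2 ^ a * X 3 ^ b) ^ (m - j)) = 0 := by
    intro j hj
    rw [Finset.mem_Icc] at hj
    obtain ⟨s, rfl⟩ : ∃ s, m = j + s := ⟨m - j, by omega⟩
    -- φ (aj j) is divisible by t^((d+1)*j)
    have hmem : φ (aj j) ∈ Ideal.span {t ^ ((d + 1) * j)} := by
      have h1 : φ (aj j) ∈ Ideal.map φ (IΔ ^ j) :=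
        Ideal.mem_map_of_mem φ (haj j hj.1 hj.2)
      rw [Ideal.map_pow] at h1
      have h2 := Ideal.pow_right_mono hmap j h1
      rwa [Ideal.span_singleton_pow, ← pow_mul, mul_comm (d+1) j, mul_comm j (d+1)] at h2
    obtain ⟨u, hu⟩ := Ideal.mem_span_singleton.mp hmem
    rw [hu, hf, mul_pow, ← pow_mul, Nat.add_sub_cancel_left]
    have hrearr : t ^ ((d + 1) * j) * u * ((1 - PowerSeries.C (θ ^ b)) ^ s * t ^ (d * s)) =
        (u * (1 - PowerSeries.C (θ ^ b)) ^ s) * t ^ ((d + 1) * j + d * s) := by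
      rw [pow_add]; ring
    rw [hrearr, PowerSeries.coeff_mul_X_pow', if_neg (by
      rw [show (d + 1) * j + d * s = d * (j + s) + j from by ring]
      exact Nat.not_le.mpr (Nat.lt_add_of_pos_right (by omega)))]
  have hfinal : (1 - θ ^ b) ^ m = 0 := by
    have h := congrArg (PowerSeries.coeff (d * m)) heqφ
    rw [map_zero, map_add, map_sum, hc1, Finset.sum_eq_zero hc2, add_zero] at h
    exact h
  have : (1 : ℂ) - θ ^ b = 0 := (pow_eq_zero_iff (by omega)).mp hfinal
  exact hθb (sub_eq_zero.mp this).symm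
end

section
/- Let p and q be integers with 2 ≤ p < q and gcd(p,q) = 1. Then the set S = { mp : m ∈ ℕ } ∪ { n ∈ ℕ : n ≥ q } is an additive submonoid of ℕ; the set G = {p} ∪ { n : q ≤ n ≤ q + p − 1 and p does not divide n } generates S as an additive monoid; for every g ∈ G, g does not belong to the additive submonoid generated by G \ {g}; and G has exactly p elements. -/
/-- Let `2 ≤ p < q` with `gcd(p,q) = 1`.  The set `S = pℕ ∪ [q, ∞)` (the saturation of the
numerical semigroup generated by `p` and `q`) is an additive submonoid of `ℕ`; the set
`G = {p} ∪ { n : q ≤ n ≤ q + p - 1, p ∤ n }` generates `S`; `G` is a minimal generating set;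
and `G` has exactly `p` elements. -/
theorem saturated_numerical_semigroup_generators (p q : ℕ)
    (hp : 2 ≤ p) (hpq : p < q) (hgcd : Nat.gcd p q = 1)
    (S G : Set ℕ)
    (hS : S = {n | ∃ m : ℕ, n = m * p} ∪ {n | q ≤ n})
    (hG : G = {p} ∪ {n | q ≤ n ∧ n ≤ q + p - 1 ∧ ¬ p ∣ n}) :
    (∃ M : AddSubmonoid ℕ, ↑M = S) ∧
    (↑(AddSubmonoid.closure G) = S) ∧
    (∀ g ∈ G, g ∉ AddSubmonoid.closure (G \ {g})) ∧
    G.ncard = p := by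
  have hp0 : 0 < p := by omega
  have hpq' : ¬ p ∣ q := by
    intro h
    have : p ∣ 1 := hgcd ▸ Nat.dvd_gcd dvd_rfl h
    have := Nat.le_of_dvd one_pos this
    omega
  -- S is a submonoid
  have hadd : ∀ a ∈ S, ∀ b ∈ S, a + b ∈ S := by
    subst hS
    rintro a (⟨m, rfl⟩ | ha) b (⟨k, rfl⟩ | hb)
    · exact Or.inl ⟨m + k, by ring⟩
    · exact Or.inr (by simp only [Set.mem_setOf_eq] at hb ⊢; omega)
    · exact Or.inr (by simp only [Set.mem_setOf_eq] at ha ⊢; omega)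
    · exact Or.inr (by simp only [Set.mem_setOf_eq] at ha hb ⊢; omega)
  have hzero : (0 : ℕ) ∈ S := by subst hS; exact Or.inl ⟨0, by ring⟩
  let M : AddSubmonoid ℕ :=
    { carrier := S
      add_mem' := fun ha hb => hadd _ ha _ hb
      zero_mem' := hzero }
  have hGS : G ⊆ S := by
    subst hS hG
    rintro x (rfl | ⟨h1, h2, h3⟩)
    · exact Or.inl ⟨1, (one_mul _).symm⟩
    · exact Or.inr h1
  have hpG : p ∈ G := by rw [hG]; exact Or.inl rfl
  have hmul : ∀ m : ℕ, m * p ∈ AddSubmonoid.closure G := by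
    intro m
    have := AddSubmonoid.nsmul_mem (AddSubmonoid.closure G)
      (AddSubmonoid.subset_closure hpG) m
    simpa [nsmul_eq_mul] using this
  have hclosure : ↑(AddSubmonoid.closure G) = S := by
    apply Set.Subset.antisymm
    · exact AddSubmonoid.closure_le.mpr (show G ⊆ (M : Set ℕ) from hGS)
    · intro n hn
      rw [hS] at hn
      rcases hn with ⟨m, rfl⟩ | hq
      · exact hmul m
      · simp only [Set.mem_setOf_eq] at hq
        by_cases hd : p ∣ n
        · obtain ⟨m, rfl⟩ := hd
          simpa [mul_comm] using hmul m
        · set g := q + (n - q) % p with hgdef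
          have hmd := Nat.mod_add_div' (n - q) p
          have hml := Nat.mod_lt (n - q) hp0
          have key : n = g + ((n - q) / p) * p := by omega
          have hgG : g ∈ G := by
            rw [hG]
            right
            refine ⟨by omega, by omega, fun hdg => hd ?_⟩
            rw [key]
            exact Nat.dvd_add hdg (dvd_mul_left p _)
          have : g + ((n - q) / p) * p ∈ AddSubmonoid.closure G :=
            add_mem (AddSubmonoid.subset_closure hgG) (hmul _)
          rwa [← key] at this
  refine ⟨⟨M, rfl⟩, hclosure, ?_, ?_⟩
  · -- minimality
    intro g hg hmem
    rw [hG] at hg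
    rcases hg with rfl | ⟨hq1, hq2, hq3⟩
    · -- g = p
      let M₁ : AddSubmonoid ℕ :=
        { carrier := {n | n = 0 ∨ q ≤ n}
          add_mem' := by
            intro a b ha hb
            simp only [Set.mem_setOf_eq] at ha hb ⊢
            omega
          zero_mem' := Or.inl rfl }
      have hsub : G \ {g} ⊆ (M₁ : Set ℕ) := by
        rintro x ⟨hx, hxg⟩
        rw [hG] at hx
        rcases hx with rfl | ⟨h1, _, _⟩
        · exact absurd rfl hxg
        · exact Or.inr h1
      have h2 : g = 0 ∨ q ≤ g := AddSubmonoid.closure_le.mpr hsub hmem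
      omega
    · -- g in the interval
      let M₂ : AddSubmonoid ℕ :=
        { carrier := {n | p ∣ n ∨ (q ≤ n ∧ n ≠ g)}
          add_mem' := by
            rintro a b (hda | ⟨ha, hag⟩) (hdb | ⟨hb, hbg⟩)
            · exact Or.inl (Nat.dvd_add hda hdb)
            · refine Or.inr ⟨by omega, fun habg => ?_⟩
              have : a = 0 ∨ p ≤ a :=
                or_iff_not_imp_left.mpr fun h => Nat.le_of_dvd (Nat.pos_of_ne_zero h) hda
              omega
            · refine Or.inr ⟨by omega, fun habg => ?_⟩
              have : b = 0 ∨ p ≤ b :=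
                or_iff_not_imp_left.mpr fun h => Nat.le_of_dvd (Nat.pos_of_ne_zero h) hdb
              omega
            · exact Or.inr ⟨by omega, by omega⟩
          zero_mem' := Or.inl (dvd_zero p) }
      have hsub : G \ {g} ⊆ (M₂ : Set ℕ) := by
        rintro x ⟨hx, hxg⟩
        simp only [Set.mem_singleton_iff] at hxg
        rw [hG] at hx
        rcases hx with rfl | ⟨h1, h2, h3⟩
        · exact Or.inl dvd_rfl
        · exact Or.inr ⟨h1, hxg⟩
      have h2 : p ∣ g ∨ (q ≤ g ∧ g ≠ g) := AddSubmonoid.closure_le.mpr hsub hmem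
      rcases h2 with h | ⟨_, h⟩
      · exact hq3 h
      · exact h rfl
  · -- cardinality
    have hFG : G = ↑(insert p ((Finset.Ico q (q + p)).filter (fun n => ¬ p ∣ n))) := by
      rw [hG]
      ext n
      simp only [Set.mem_union, Set.mem_singleton_iff, Set.mem_setOf_eq, Finset.coe_insert,
        Set.mem_insert_iff, Finset.coe_filter, Finset.mem_Ico]
      constructor
      · rintro (rfl | ⟨h1, h2, h3⟩)
        · exact Or.inl rfl
        · exact Or.inr ⟨⟨h1, by omega⟩, h3⟩
      · rintro (rfl | ⟨⟨h1, h2⟩, h3⟩)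
        · exact Or.inl rfl
        · exact Or.inr ⟨h1, by omega, h3⟩
    rw [hFG, Set.ncard_coe_finset]
    have hpnot : p ∉ (Finset.Ico q (q + p)).filter (fun n => ¬ p ∣ n) := by
      simp only [Finset.mem_filter, Finset.mem_Ico]
      omega
    rw [Finset.card_insert_of_notMem hpnot]
    -- the multiples of p in [q, q+p) form a singleton
    have hmult : (Finset.Ico q (q + p)).filter (fun n => p ∣ n) = {p * (q / p + 1)} := by
      have hqm : q % p ≠ 0 := fun h => hpq' (Nat.dvd_of_mod_eq_zero h)
      have hmd := Nat.mod_add_div q p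
      have hmlt := Nat.mod_lt q hp0
      have hq1 : p * (q / p) < q := by omega
      have hq2 : q < p * (q / p) + p := by omega
      have hr1 : p * (q / p + 1) = p * (q / p) + p := by ring
      ext n
      simp only [Finset.mem_filter, Finset.mem_Ico, Finset.mem_singleton]
      constructor
      · rintro ⟨⟨h1, h2⟩, k, rfl⟩
        have hk : k = q / p + 1 := by
          have hr2 : p * (q / p + 2) = p * (q / p) + p + p := by ring
          have h3 : k < q / p + 2 := by
            have : p * k < p * (q / p + 2) := by omega
            exact Nat.lt_of_mul_lt_mul_left this
          have h4 : q / p < k := by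
            have : p * (q / p) < p * k := by omega
            exact Nat.lt_of_mul_lt_mul_left this
          omega
        rw [hk]
      · rintro rfl
        exact ⟨⟨by omega, by omega⟩, ⟨q / p + 1, rfl⟩⟩
    have hsplit := Finset.card_filter_add_card_filter_not
      (s := Finset.Ico q (q + p)) (p := fun n => p ∣ n)
    rw [hmult, Finset.card_singleton, Nat.card_Ico] at hsplit
    omega
end

section
/- Let d ≥ 1, let A be a finite subset of ℤ^d, and let m ∈ ℤ^d. If there exist nonnegative real numbers λ_a (a ∈ A) such that m = Σ_{a ∈ A} λ_a • a in ℝ^d (identifying ℤ^d with its image in ℝ^d), then there exists an integer k ≥ 1 such that k • m belongs to the additive submonoid of ℤ^d generated by A. -/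
open Matrix

private lemma clear_denom (q : ℚ) (n : ℕ) (h : q.den ∣ n) : ∃ z : ℤ, (z : ℚ) = n * q := by
  obtain ⟨c, hc⟩ := h
  refine ⟨c * q.num, ?_⟩
  have hq : (q.den : ℚ) * q = q.num := by
    rw [mul_comm]; exact_mod_cast q.mul_den_eq_num
  push_cast [hc]
  rw [mul_assoc, mul_left_comm, hq]

private lemma map_mulVec' {ι κ R S : Type*} [Fintype κ] [NonAssocSemiring R] [NonAssocSemiring S]
    (f : R →+* S) (A : Matrix ι κ R) (v : κ → R) (a : ι) :
    (A.map f).mulVec (fun i => f (v i)) a = f (A.mulVec v a) := by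
  simp [Matrix.mulVec, dotProduct, map_sum]

/-- Rational coefficients in the linearly independent case. -/
private lemma rat_coeffs {d : ℕ} (B : Finset (Fin d → ℤ)) (m : Fin d → ℤ)
    (lam : (Fin d → ℤ) → ℝ)
    (hli : LinearIndependent ℝ (fun a : B => (fun i => ((a : Fin d → ℤ) i : ℝ))))
    (hm : (fun i => (m i : ℝ)) = ∑ a ∈ B, lam a • (fun i => (a i : ℝ))) :
    ∃ μ : (Fin d → ℤ) → ℚ, ∀ a ∈ B, (μ a : ℝ) = lam a := by
  classical
  set NZ : Matrix (Fin d) B ℤ := Matrix.of fun i a => (a : Fin d → ℤ) i with hNZ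
  set NR : Matrix (Fin d) B ℝ := NZ.map (Int.cast : ℤ → ℝ) with hNR
  have hinj : Function.Injective NR.mulVec := by
    rw [Matrix.mulVec_injective_iff]
    exact hli
  have hkerG : LinearMap.ker (NRᵀ * NR).mulVecLin = ⊥ := by
    rw [Matrix.ker_mulVecLin_transpose_mul_self]
    rw [LinearMap.ker_eq_bot]
    exact hinj
  have hGinj : Function.Injective (NRᵀ * NR).mulVec := by
    have h := LinearMap.ker_eq_bot.mp hkerG
    rwa [← Matrix.coe_mulVecLin]
  have hGunit : IsUnit (NRᵀ * NR) := Matrix.mulVec_injective_iff_isUnit.mp hGinj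
  set GZ : Matrix B B ℤ := NZᵀ * NZ with hGZ
  have hmapR : GZ.map (Int.cast : ℤ → ℝ) = NRᵀ * NR := by
    ext i j
    simp only [hGZ, hNR, Matrix.map_apply, Matrix.mul_apply, Matrix.transpose_apply]
    push_cast
    rfl
  have hdetR : ((GZ.det : ℝ)) ≠ 0 := by
    have hu : IsUnit (NRᵀ * NR).det := (Matrix.isUnit_iff_isUnit_det _).mp hGunit
    rw [← hmapR] at hu
    have hd : (GZ.map (Int.cast : ℤ → ℝ)).det = ((GZ.det : ℝ)) :=
      (RingHom.map_det (Int.castRingHom ℝ) GZ).symm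
    rw [hd] at hu
    exact hu.ne_zero
  have hdetZ : GZ.det ≠ 0 := fun h => hdetR (by rw [h]; simp)
  set GQ : Matrix B B ℚ := GZ.map (Int.cast : ℤ → ℚ) with hGQ
  have hdetQ : IsUnit GQ.det := by
    have hd : GQ.det = ((GZ.det : ℚ)) := (RingHom.map_det (Int.castRingHom ℚ) GZ).symm
    rw [hd, isUnit_iff_ne_zero]
    exact_mod_cast hdetZ
  set rhsZ : B → ℤ := NZᵀ.mulVec m with hrhsZ
  set μ0 : B → ℚ := GQ⁻¹.mulVec (fun a => (rhsZ a : ℚ)) with hμ0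
  have hsolQ : GQ.mulVec μ0 = fun a => (rhsZ a : ℚ) := by
    rw [hμ0, Matrix.mulVec_mulVec, Matrix.mul_nonsing_inv _ hdetQ, Matrix.one_mulVec]
  have hmapQR : GQ.map (Rat.cast : ℚ → ℝ) = NRᵀ * NR := by
    rw [hGQ, Matrix.map_map, ← hmapR]
    congr 1
  have hsolR : (NRᵀ * NR).mulVec (fun a => ((μ0 a : ℚ) : ℝ)) = fun a => ((rhsZ a : ℤ) : ℝ) := by
    rw [← hmapQR]
    funext a
    have h1 := map_mulVec' (Rat.castHom ℝ) GQ μ0 a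
    exact h1.trans (by rw [congrFun hsolQ a]; norm_cast)
  have hNm : NR.mulVec (fun a : B => lam a) = fun i => (m i : ℝ) := by
    funext i
    have hmi : (m i : ℝ) = ∑ a ∈ B, lam a * (a i : ℝ) := by
      have := congrFun hm i
      simpa [Finset.sum_apply] using this
    rw [hmi]
    simp only [Matrix.mulVec, dotProduct]
    rw [← Finset.sum_attach B (fun a => lam a * (a i : ℝ))]
    apply Finset.sum_congr rfl
    intro a _
    simp [hNR, hNZ, mul_comm]
  have hsolR' : (NRᵀ * NR).mulVec (fun a : B => lam a) = fun a => ((rhsZ a : ℤ) : ℝ) := by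
    rw [← Matrix.mulVec_mulVec, hNm]
    funext a
    exact map_mulVec' (Int.castRingHom ℝ) NZᵀ m a
  have key : (fun a : B => lam a) = fun a => ((μ0 a : ℚ) : ℝ) :=
    hGinj (by rw [hsolR, hsolR'])
  refine ⟨fun a => if h : a ∈ B then μ0 ⟨a, h⟩ else 0, ?_⟩
  intro a ha
  have := congrFun key ⟨a, ha⟩
  simp only [dif_pos ha]
  exact this.symm

private lemma aux {d : ℕ} (n : ℕ) : ∀ (B : Finset (Fin d → ℤ)), B.card ≤ n →
    ∀ (m : Fin d → ℤ) (lam : (Fin d → ℤ) → ℝ),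
    (∀ a ∈ B, 0 ≤ lam a) →
    ((fun i => (m i : ℝ)) = ∑ a ∈ B, lam a • (fun i => (a i : ℝ))) →
    ∃ k : ℕ, 1 ≤ k ∧ k • m ∈ AddSubmonoid.closure (B : Set (Fin d → ℤ)) := by
  classical
  induction n with
  | zero =>
    intro B hB m lam _ hm
    have hBe : B = ∅ := Finset.card_eq_zero.mp (Nat.le_zero.mp hB)
    subst hBe
    simp only [Finset.sum_empty] at hm
    have hm0 : m = 0 := by
      funext i
      have := congrFun hm i
      simp only [Pi.zero_apply] at this ⊢
      exact_mod_cast this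
    exact ⟨1, le_refl _, by simp [hm0]⟩
  | succ n ih =>
    intro B hB m lam hnn hm
    by_cases hli : LinearIndependent ℝ (fun a : B => (fun i => ((a : Fin d → ℤ) i : ℝ)))
    · -- linearly independent case: rational coefficients
      obtain ⟨μ, hμ⟩ := rat_coeffs B m lam hli hm
      set k : ℕ := ∏ a ∈ B, (μ a).den with hk
      have hk1 : 1 ≤ k := Finset.one_le_prod' (fun a _ => (μ a).pos)
      have hz : ∀ a : (Fin d → ℤ), ∃ z : ℤ, a ∈ B → (z : ℚ) = k * μ a := by
        intro a
        by_cases ha : a ∈ B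
        · obtain ⟨zz, h⟩ := clear_denom (μ a) k (Finset.dvd_prod_of_mem _ ha)
          exact ⟨zz, fun _ => h⟩
        · exact ⟨0, fun h => absurd h ha⟩
      choose z hzz using hz
      have hμnn : ∀ a ∈ B, 0 ≤ μ a := by
        intro a ha
        have : (0 : ℝ) ≤ (μ a : ℝ) := by rw [hμ a ha]; exact hnn a ha
        exact_mod_cast this
      have hznn : ∀ a ∈ B, 0 ≤ z a := by
        intro a ha
        have h1 : (0 : ℚ) ≤ (z a : ℚ) := by
          rw [hzz a ha]
          exact mul_nonneg (by positivity) (hμnn a ha)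
        exact_mod_cast h1
      have key : ∀ i, (k : ℝ) * (m i : ℝ) = ∑ a ∈ B, (z a : ℝ) * (a i : ℝ) := by
        intro i
        have hmi : (m i : ℝ) = ∑ a ∈ B, lam a * (a i : ℝ) := by
          simpa [Finset.sum_apply] using congrFun hm i
        rw [hmi, Finset.mul_sum]
        apply Finset.sum_congr rfl
        intro a ha
        have h2 : ((z a : ℚ) : ℝ) = ((k : ℚ) : ℝ) * ((μ a : ℚ) : ℝ) := by
          rw [hzz a ha]; push_cast; ring
        rw [hμ a ha] at h2
        have h3 : (z a : ℝ) = (k : ℝ) * lam a := by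
          rw [show ((z a : ℤ) : ℝ) = ((z a : ℚ) : ℝ) by norm_cast, h2]
          norm_cast
        rw [h3]; ring
      have heq : k • m = ∑ a ∈ B, (z a).toNat • a := by
        funext i
        have l1 : ((k • m) i) = (k : ℤ) * m i := by
          simp [mul_comm]
        have l2 : ((∑ a ∈ B, (z a).toNat • a) i) = ∑ a ∈ B, z a * a i := by
          rw [Finset.sum_apply]
          apply Finset.sum_congr rfl
          intro a ha
          have ht : ((z a).toNat : ℤ) = z a := Int.toNat_of_nonneg (hznn a ha)
          rw [Pi.smul_apply, nsmul_eq_mul, ht]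
        have : (((k • m) i : ℤ) : ℝ) = (((∑ a ∈ B, (z a).toNat • a) i : ℤ) : ℝ) := by
          rw [l1, l2]
          push_cast
          exact key i
        exact_mod_cast this
      refine ⟨k, hk1, ?_⟩
      rw [heq]
      exact AddSubmonoid.sum_mem _ (fun a ha =>
        nsmul_mem (AddSubmonoid.subset_closure (Finset.mem_coe.mpr ha)) _)
    · -- dependent case: reduce the support
      rw [Fintype.not_linearIndependent_iff] at hli
      obtain ⟨g, hg0, i0, hi0⟩ := hli
      obtain ⟨g1, hg1sum, a0', hg1pos⟩ :
          ∃ g1 : B → ℝ, (∑ a : B, g1 a • (fun i => ((a : Fin d → ℤ) i : ℝ))) = 0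
            ∧ ∃ a : B, 0 < g1 a := by
        rcases hi0.lt_or_gt with h | h
        · exact ⟨-g, by simpa using congrArg Neg.neg hg0, i0, by simpa using h⟩
        · exact ⟨g, hg0, i0, h⟩
      set P : Finset B := Finset.univ.filter (fun a => 0 < g1 a) with hP
      have hPne : P.Nonempty := ⟨a0', by simp [hP, hg1pos]⟩
      obtain ⟨a0, ha0P, hmin⟩ := Finset.exists_min_image P (fun a => lam ↑a / g1 a) hPne
      have ha0pos : 0 < g1 a0 := by
        have := Finset.mem_filter.mp ha0P
        exact this.2
      set t : ℝ := lam ↑a0 / g1 a0 with htdef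
      have ht0 : 0 ≤ t := div_nonneg (hnn _ a0.2) ha0pos.le
      set g' : (Fin d → ℤ) → ℝ := fun a => if h : a ∈ B then g1 ⟨a, h⟩ else 0 with hg'
      set lam' : (Fin d → ℤ) → ℝ := fun a => lam a - t * g' a with hlam'
      set B' : Finset (Fin d → ℤ) := B.erase ↑a0 with hB'
      have hcard : B'.card ≤ n := by
        rw [hB', Finset.card_erase_of_mem a0.2]
        omega
      have hnn' : ∀ a ∈ B', 0 ≤ lam' a := by
        intro a ha
        have haB : a ∈ B := Finset.mem_of_mem_erase ha
        simp only [hlam', hg', dif_pos haB]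
        by_cases hpos : 0 < g1 ⟨a, haB⟩
        · have hmem : (⟨a, haB⟩ : B) ∈ P := Finset.mem_filter.mpr ⟨Finset.mem_univ _, hpos⟩
          have := hmin _ hmem
          have h4 : t * g1 ⟨a, haB⟩ ≤ lam a := by
            rw [htdef]
            calc lam ↑a0 / g1 a0 * g1 ⟨a, haB⟩ ≤ lam a / g1 ⟨a, haB⟩ * g1 ⟨a, haB⟩ := by
                  apply mul_le_mul_of_nonneg_right this hpos.le
              _ = lam a := div_mul_cancel₀ _ (ne_of_gt hpos)
          linarith
        · push_neg at hpos
          have : t * g1 ⟨a, haB⟩ ≤ 0 := mul_nonpos_of_nonneg_of_nonpos ht0 hpos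
          have := hnn a haB
          linarith
      have hg'sum : (∑ a ∈ B, g' a • (fun i => ((a i : ℝ)))) = 0 := by
        rw [← Finset.sum_coe_sort B (fun a => g' a • (fun i => ((a i : ℝ))))]
        rw [← hg1sum]
        apply Finset.sum_congr rfl
        intro a _
        congr 1
        simp [hg']
      have hla0 : lam' ↑a0 = 0 := by
        simp only [hlam', hg', dif_pos a0.2]
        rw [htdef]
        have : (⟨(a0 : Fin d → ℤ), a0.2⟩ : B) = a0 := Subtype.eta _ _
        rw [this]
        field_simp
        ring
      have hsB : (∑ a ∈ B, lam' a • (fun i => ((a i : ℝ)))) = (fun i => (m i : ℝ)) := by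
        have hsplit : ∀ a ∈ B, lam' a • (fun i => ((a i : ℝ)))
            = lam a • (fun i => ((a i : ℝ))) - t • (g' a • (fun i => ((a i : ℝ)))) := by
          intro a _
          simp only [hlam', sub_smul, smul_smul]
        rw [Finset.sum_congr rfl hsplit, Finset.sum_sub_distrib, ← Finset.smul_sum, hg'sum,
          smul_zero, sub_zero, ← hm]
      have hsum' : (fun i => (m i : ℝ)) = ∑ a ∈ B', lam' a • (fun i => (a i : ℝ)) := by
        rw [hB', Finset.sum_erase _ (by rw [hla0, zero_smul]), hsB]
      obtain ⟨k, hk1, hkmem⟩ := ih B' hcard m lam' hnn' hsum'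
      refine ⟨k, hk1, ?_⟩
      exact AddSubmonoid.closure_mono (by
        rw [hB']
        exact_mod_cast Finset.erase_subset _ _) hkmem

/-- If `m ∈ ℤ^d` lies in the real cone spanned with nonnegative coefficients by a finite set
`A ⊆ ℤ^d`, then some positive multiple `k • m` lies in the additive submonoid of `ℤ^d`
generated by `A`. -/
theorem multiple_in_semigroup_of_mem_cone (d : ℕ) (hd : 1 ≤ d)
    (A : Finset (Fin d → ℤ)) (m : Fin d → ℤ) (lam : (Fin d → ℤ) → ℝ)
    (hnn : ∀ a ∈ A, 0 ≤ lam a)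
    (hm : (fun i => (m i : ℝ)) = ∑ a ∈ A, lam a • (fun i => (a i : ℝ))) :
    ∃ k : ℕ, 1 ≤ k ∧ k • m ∈ AddSubmonoid.closure (A : Set (Fin d → ℤ)) := by
  exact aux A.card A le_rfl m lam hnn hm
end
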